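/- Let U ≥ 1, α ≥ U^{-1/2}, and ν ≥ 1 + α. Then (U/π)^{1/2} ∫_{|x-ν| ≤ α, x ≥ 1} (e^{-U(x-ν)²} + e^{-U(x+ν)²}) dx = 1 + O(e^{-Uα²}/(α√U)), and (U/π)^{1/2} ∫_{x ≥ 1, |x-ν| ≥ α} (e^{-U(x-ν)²} + e^{-U(x+ν)²}) dx = O(e^{-Uα²}/(α√U)), with absolute implied constants. -/

import Mathlib

open MeasureTheory Real Set Filter

lemma tail_bound {U a : ℝ} (hU : 0 < U) (ha : 0 < a) :
    ∫ x in Set.Ioi a, Real.exp (-U * x ^ 2) ≤ Real.exp (-U * a ^ 2) / (2 * U * a) := by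
  have hint : IntegrableOn (fun x => x * Real.exp (-U * x ^ 2)) (Set.Ioi a) :=
    (integrable_mul_exp_neg_mul_sq hU).integrableOn
  have key : ∫ x in Set.Ioi a, x * Real.exp (-U * x ^ 2)
      = Real.exp (-U * a ^ 2) / (2 * U) := by
    have hderiv : ∀ x ∈ Set.Ioi a,
        HasDerivAt (fun y => -Real.exp (-U * y ^ 2) / (2 * U))
          (x * Real.exp (-U * x ^ 2)) x := by
      intro x hx
      have h1 : HasDerivAt (fun y : ℝ => -U * y ^ 2) (-U * (2 * x)) x := by
        simpa using ((hasDerivAt_pow 2 x).const_mul (-U))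
      have h2 := (h1.exp).neg.div_const (2 * U)
      convert h2 using 1
      all_goals first | rfl | (field_simp; ring) | field_simp
    have htend : Tendsto (fun y => -Real.exp (-U * y ^ 2) / (2 * U)) atTop (nhds 0) := by
      have h0 : Tendsto (fun y : ℝ => -U * y ^ 2) atTop atBot :=
        (tendsto_pow_atTop (two_ne_zero)).const_mul_atTop_of_neg (by linarith)
      have h1 : Tendsto (fun y : ℝ => Real.exp (-U * y ^ 2)) atTop (nhds 0) :=
        Real.tendsto_exp_atBot.comp h0
      have := (h1.neg).div_const (2 * U)
      simpa using this
    have hcont : ContinuousWithinAt (fun y => -Real.exp (-U * y ^ 2) / (2 * U))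
        (Set.Ici a) a := by
      apply Continuous.continuousWithinAt
      continuity
    have := integral_Ioi_of_hasDerivAt_of_tendsto hcont hderiv hint htend
    rw [this]
    ring
  have hmono : ∫ x in Set.Ioi a, Real.exp (-U * x ^ 2)
      ≤ ∫ x in Set.Ioi a, (1 / a) * (x * Real.exp (-U * x ^ 2)) := by
    apply setIntegral_mono_on
    · exact (integrable_exp_neg_mul_sq hU).integrableOn
    · exact hint.const_mul _
    · exact measurableSet_Ioi
    · intro x hx
      have hxa : a ≤ x := le_of_lt hx
      have hxpos : 0 < x := lt_of_lt_of_le ha hxa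
      have : 1 ≤ x / a := (one_le_div ha).mpr hxa
      have hE : 0 < Real.exp (-U * x ^ 2) := Real.exp_pos _
      calc Real.exp (-U * x ^ 2) = 1 * Real.exp (-U * x ^ 2) := by ring
        _ ≤ (x / a) * Real.exp (-U * x ^ 2) := by nlinarith
        _ = (1 / a) * (x * Real.exp (-U * x ^ 2)) := by ring
  rw [integral_const_mul, key] at hmono
  calc ∫ x in Set.Ioi a, Real.exp (-U * x ^ 2)
      ≤ 1 / a * (Real.exp (-U * a ^ 2) / (2 * U)) := hmono
    _ = Real.exp (-U * a ^ 2) / (2 * U * a) := by field_simp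

lemma master {U a : ℝ} (hU : 0 < U) (ha : 0 < a) {S : Set ℝ} (hS : MeasurableSet S)
    (h : ∀ x ∈ S, a ≤ |x|) :
    ∫ x in S, Real.exp (-U * x ^ 2) ≤ Real.exp (-U * a ^ 2) / (U * a) := by
  have hInt : Integrable (fun x : ℝ => Real.exp (-U * x ^ 2)) := integrable_exp_neg_mul_sq hU
  have hsub : S ⊆ Set.Iic (-a) ∪ Set.Ici a := by
    intro x hx
    rcases le_abs.mp (h x hx) with h1 | h1
    · exact Or.inr h1
    · exact Or.inl (by simp only [Set.mem_Iic]; linarith)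
  have h1 : ∫ x in S, Real.exp (-U * x ^ 2)
      ≤ ∫ x in Set.Iic (-a) ∪ Set.Ici a, Real.exp (-U * x ^ 2) := by
    apply setIntegral_mono_set hInt.integrableOn
    · filter_upwards with x using (Real.exp_pos _).le
    · exact HasSubset.Subset.eventuallyLE hsub
  have hdisj : Disjoint (Set.Iic (-a)) (Set.Ici a) :=
    Set.Iic_disjoint_Ici.mpr (by intro hc; linarith)
  have h2 : ∫ x in Set.Iic (-a) ∪ Set.Ici a, Real.exp (-U * x ^ 2)
      = (∫ x in Set.Iic (-a), Real.exp (-U * x ^ 2))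
        + ∫ x in Set.Ici a, Real.exp (-U * x ^ 2) :=
    setIntegral_union hdisj measurableSet_Ici hInt.integrableOn hInt.integrableOn
  have h3 : ∫ x in Set.Iic (-a), Real.exp (-U * x ^ 2)
      = ∫ x in Set.Ioi a, Real.exp (-U * x ^ 2) := by
    rw [show Set.Ioi a = Set.Ioi (-(-a)) by ring_nf,
      ← integral_comp_neg_Iic (-a) (fun x => Real.exp (-U * x ^ 2))]
    simp
  have h4 : ∫ x in Set.Ici a, Real.exp (-U * x ^ 2)
      = ∫ x in Set.Ioi a, Real.exp (-U * x ^ 2) := integral_Ici_eq_integral_Ioi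
  have h5 := tail_bound hU ha
  calc ∫ x in S, Real.exp (-U * x ^ 2)
      ≤ _ := h1
    _ = (∫ x in Set.Ioi a, Real.exp (-U * x ^ 2))
        + ∫ x in Set.Ioi a, Real.exp (-U * x ^ 2) := by rw [h2, h3, h4]
    _ ≤ Real.exp (-U * a ^ 2) / (2 * U * a) + Real.exp (-U * a ^ 2) / (2 * U * a) := by
        linarith
    _ = Real.exp (-U * a ^ 2) / (U * a) := by field_simp; ring

lemma master' {U a m : ℝ} (hU : 0 < U) (ha : 0 < a) {S : Set ℝ} (hS : MeasurableSet S)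
    (h : ∀ x ∈ S, a ≤ |x - m|) :
    ∫ x in S, Real.exp (-U * (x - m) ^ 2) ≤ Real.exp (-U * a ^ 2) / (U * a) := by
  have hmp : MeasurePreserving (fun x : ℝ => x - m) volume volume :=
    measurePreserving_sub_right volume m
  have hemb : MeasurableEmbedding (fun x : ℝ => x - m) :=
    (Homeomorph.subRight m).measurableEmbedding
  have hSset : MeasurableSet ((fun x : ℝ => x + m) ⁻¹' S) :=
    hS.preimage (measurable_id.add_const m)
  have hpre : (fun x : ℝ => x - m) ⁻¹' ((fun x : ℝ => x + m) ⁻¹' S) = S := by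
    ext x; simp
  have heq := hmp.setIntegral_preimage_emb hemb
      (fun y => Real.exp (-U * y ^ 2)) ((fun x : ℝ => x + m) ⁻¹' S)
  rw [hpre] at heq
  rw [heq]
  apply master hU ha hSset
  intro y hy
  have : y + m ∈ S := hy
  simpa using h (y + m) this
open MeasureTheory Real

theorem stmt4 :
    ∃ C > (0:ℝ), ∀ U α ν : ℝ, 1 ≤ U → U ^ (-(1:ℝ)/2) ≤ α → 1 + α ≤ ν →
      |Real.sqrt (U / π) *
          (∫ x in {x : ℝ | 1 ≤ x ∧ |x - ν| ≤ α},
            (Real.exp (-U * (x - ν) ^ 2) + Real.exp (-U * (x + ν) ^ 2))) - 1|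
        ≤ C * Real.exp (-U * α ^ 2) / (α * Real.sqrt U) ∧
      Real.sqrt (U / π) *
          (∫ x in {x : ℝ | 1 ≤ x ∧ α ≤ |x - ν|},
            (Real.exp (-U * (x - ν) ^ 2) + Real.exp (-U * (x + ν) ^ 2)))
        ≤ C * Real.exp (-U * α ^ 2) / (α * Real.sqrt U) := by
  refine ⟨4, by norm_num, ?_⟩
  intro U α ν hU hα hν
  have hU0 : (0:ℝ) < U := lt_of_lt_of_le one_pos hU
  have hα0 : (0:ℝ) < α := lt_of_lt_of_le (Real.rpow_pos_of_pos hU0 _) hα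
  have hπ : (0:ℝ) < π := Real.pi_pos
  have hsU : 0 < Real.sqrt U := Real.sqrt_pos.mpr hU0
  have hsUπ : 0 ≤ Real.sqrt (U / π) := Real.sqrt_nonneg _
  set E : ℝ := Real.exp (-U * α ^ 2) with hE
  have hE0 : 0 < E := Real.exp_pos _
  set T : ℝ := E / (U * α) with hT
  have hT0 : 0 ≤ T := by positivity
  -- integrability
  have hf : Integrable (fun x : ℝ => Real.exp (-U * (x - ν) ^ 2)) :=
    (integrable_exp_neg_mul_sq hU0).comp_sub_right ν
  have hg : Integrable (fun x : ℝ => Real.exp (-U * (x + ν) ^ 2)) := by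
    have := (integrable_exp_neg_mul_sq hU0).comp_sub_right (-ν)
    simpa [sub_neg_eq_add] using this
  -- numeric comparison
  have hnum : Real.sqrt (U / π) * T ≤ E / (α * Real.sqrt U) := by
    have hss : Real.sqrt U * Real.sqrt U = U := Real.mul_self_sqrt hU0.le
    have h1 : Real.sqrt (U / π) ≤ Real.sqrt U := by
      apply Real.sqrt_le_sqrt
      rw [div_le_iff₀ hπ]
      nlinarith [Real.pi_gt_three]
    have h2 : Real.sqrt U * T = E / (α * Real.sqrt U) := by
      rw [hT, eq_div_iff (by positivity)]
      field_simp
      linear_combination hss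
    calc Real.sqrt (U / π) * T ≤ Real.sqrt U * T := by
          exact mul_le_mul_of_nonneg_right h1 hT0
      _ = E / (α * Real.sqrt U) := h2
  have hfour : E / (α * Real.sqrt U) + E / (α * Real.sqrt U)
      ≤ 4 * E / (α * Real.sqrt U) := by
    rw [← add_div, div_le_div_iff₀ (by positivity) (by positivity)]
    nlinarith [hE0, mul_pos hα0 hsU]
  constructor
  · -- first estimate
    have hset1 : {x : ℝ | 1 ≤ x ∧ |x - ν| ≤ α} = Set.Icc (ν - α) (ν + α) := by
      ext x
      simp only [Set.mem_setOf_eq, Set.mem_Icc, abs_le]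
      constructor
      · rintro ⟨h1, h2, h3⟩; exact ⟨by linarith, by linarith⟩
      · rintro ⟨h1, h2⟩; exact ⟨by linarith, ⟨by linarith, by linarith⟩⟩
    rw [hset1]
    have hadd : ∫ x in Set.Icc (ν - α) (ν + α),
        (Real.exp (-U * (x - ν) ^ 2) + Real.exp (-U * (x + ν) ^ 2))
        = (∫ x in Set.Icc (ν - α) (ν + α), Real.exp (-U * (x - ν) ^ 2))
          + ∫ x in Set.Icc (ν - α) (ν + α), Real.exp (-U * (x + ν) ^ 2) :=
      integral_add hf.integrableOn hg.integrableOn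
    have hcompl : (∫ x in Set.Icc (ν - α) (ν + α), Real.exp (-U * (x - ν) ^ 2))
        + ∫ x in (Set.Icc (ν - α) (ν + α))ᶜ, Real.exp (-U * (x - ν) ^ 2)
        = ∫ x : ℝ, Real.exp (-U * (x - ν) ^ 2) :=
      integral_add_compl measurableSet_Icc hf
    have htotal : Real.sqrt (U / π) * ∫ x : ℝ, Real.exp (-U * (x - ν) ^ 2) = 1 := by
      rw [integral_sub_right_eq_self (fun x : ℝ => Real.exp (-U * x ^ 2)) ν,
        integral_gaussian, ← Real.sqrt_mul (by positivity) (π / U),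
        show U / π * (π / U) = 1 by field_simp]
      exact Real.sqrt_one
    have hcb : ∫ x in (Set.Icc (ν - α) (ν + α))ᶜ, Real.exp (-U * (x - ν) ^ 2) ≤ T := by
      apply master' hU0 hα0 measurableSet_Icc.compl
      intro x hx
      simp only [Set.mem_compl_iff, Set.mem_Icc, not_and_or, not_le] at hx
      rw [le_abs]
      rcases hx with h1 | h1
      · right; linarith
      · left; linarith
    have hgb : ∫ x in Set.Icc (ν - α) (ν + α), Real.exp (-U * (x + ν) ^ 2) ≤ T := by
      have hcond : ∀ x ∈ Set.Icc (ν - α) (ν + α), α ≤ |x - (-ν)| := by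
        intro x hx
        rw [Set.mem_Icc] at hx
        rw [sub_neg_eq_add, le_abs]
        left; linarith [hx.1]
      have heq : (fun x : ℝ => Real.exp (-U * (x + ν) ^ 2))
          = fun x : ℝ => Real.exp (-U * (x - (-ν)) ^ 2) :=
        funext fun x => by rw [sub_neg_eq_add]
      rw [heq]
      exact master' hU0 hα0 measurableSet_Icc hcond
    have hc0 : 0 ≤ ∫ x in (Set.Icc (ν - α) (ν + α))ᶜ, Real.exp (-U * (x - ν) ^ 2) :=
      setIntegral_nonneg measurableSet_Icc.compl (fun x _ => (Real.exp_pos _).le)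
    have hg0 : 0 ≤ ∫ x in Set.Icc (ν - α) (ν + α), Real.exp (-U * (x + ν) ^ 2) :=
      setIntegral_nonneg measurableSet_Icc (fun x _ => (Real.exp_pos _).le)
    have hval : Real.sqrt (U / π) *
        (∫ x in Set.Icc (ν - α) (ν + α),
          (Real.exp (-U * (x - ν) ^ 2) + Real.exp (-U * (x + ν) ^ 2))) - 1
        = Real.sqrt (U / π) *
          ((∫ x in Set.Icc (ν - α) (ν + α), Real.exp (-U * (x + ν) ^ 2))
            - ∫ x in (Set.Icc (ν - α) (ν + α))ᶜ, Real.exp (-U * (x - ν) ^ 2)) := by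
      rw [hadd, ← htotal, ← hcompl]
      ring
    rw [hval, abs_mul, abs_of_nonneg hsUπ]
    have habs : |(∫ x in Set.Icc (ν - α) (ν + α), Real.exp (-U * (x + ν) ^ 2))
        - ∫ x in (Set.Icc (ν - α) (ν + α))ᶜ, Real.exp (-U * (x - ν) ^ 2)| ≤ T := by
      rw [abs_le]
      constructor <;> linarith
    calc Real.sqrt (U / π) * |(∫ x in Set.Icc (ν - α) (ν + α), Real.exp (-U * (x + ν) ^ 2))
        - ∫ x in (Set.Icc (ν - α) (ν + α))ᶜ, Real.exp (-U * (x - ν) ^ 2)|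
        ≤ Real.sqrt (U / π) * T := mul_le_mul_of_nonneg_left habs hsUπ
      _ ≤ E / (α * Real.sqrt U) := hnum
      _ ≤ 4 * E / (α * Real.sqrt U) := by
          rw [div_le_div_iff₀ (by positivity) (by positivity)]
          nlinarith [hE0, mul_pos hα0 hsU]
  · -- second estimate
    set S : Set ℝ := {x : ℝ | 1 ≤ x ∧ α ≤ |x - ν|} with hS
    have hSm : MeasurableSet S := by
      apply IsClosed.measurableSet
      have : S = {x : ℝ | 1 ≤ x} ∩ {x : ℝ | α ≤ |x - ν|} := rfl
      rw [this]
      exact (isClosed_le continuous_const continuous_id).inter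
        (isClosed_le continuous_const ((continuous_id.sub continuous_const).abs))
    have hadd : ∫ x in S,
        (Real.exp (-U * (x - ν) ^ 2) + Real.exp (-U * (x + ν) ^ 2))
        = (∫ x in S, Real.exp (-U * (x - ν) ^ 2))
          + ∫ x in S, Real.exp (-U * (x + ν) ^ 2) :=
      integral_add hf.integrableOn hg.integrableOn
    have hfb : ∫ x in S, Real.exp (-U * (x - ν) ^ 2) ≤ T :=
      master' hU0 hα0 hSm (fun x hx => hx.2)
    have hgb : ∫ x in S, Real.exp (-U * (x + ν) ^ 2) ≤ T := by
      have hcond : ∀ x ∈ S, α ≤ |x - (-ν)| := by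
        intro x hx
        have h1 : (1:ℝ) ≤ x := hx.1
        rw [sub_neg_eq_add, le_abs]
        left; linarith
      have heq : (fun x : ℝ => Real.exp (-U * (x + ν) ^ 2))
          = fun x : ℝ => Real.exp (-U * (x - (-ν)) ^ 2) :=
        funext fun x => by rw [sub_neg_eq_add]
      rw [heq]
      exact master' hU0 hα0 hSm hcond
    calc Real.sqrt (U / π) * ∫ x in S,
          (Real.exp (-U * (x - ν) ^ 2) + Real.exp (-U * (x + ν) ^ 2))
        ≤ Real.sqrt (U / π) * (T + T) := by
          rw [hadd]
          exact mul_le_mul_of_nonneg_left (by linarith) hsUπ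
      _ = Real.sqrt (U / π) * T + Real.sqrt (U / π) * T := by ring
      _ ≤ E / (α * Real.sqrt U) + E / (α * Real.sqrt U) := by linarith
      _ ≤ 4 * E / (α * Real.sqrt U) := hfour
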